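/- Suppose the family of n-stage value functions {v_n : n ≥ 1} and the long-run value w∞ all admit a common modulus of continuity η. Let x, y ∈ X and suppose there exists a strategy σ* with (1/n)∑_{m=1}^n r_m → v(x) P^x_{σ*}-a.s., where v = limsup_n v_n. Then w∞(x) = v(x), and for every ε > 0 there exists a strategy σ with E^y_σ[liminf_n (1/n)∑ r_m] ≥ v(y) − 2η(d(x,y)) − ε. -/

import Mathlib

open MeasureTheory Filter Topology
open scoped ENNReal

/-- Real-valued Fatou for uniformly bounded nonneg measurable sequences. -/
lemma fatou_real {α : Type*} [MeasurableSpace α] (μ : Measure α) [IsProbabilityMeasure μ]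
    (f : ℕ → α → ℝ) (hm : ∀ n, Measurable (f n)) (h0 : ∀ n a, 0 ≤ f n a)
    (h1 : ∀ n a, f n a ≤ 1) :
    ∫ a, liminf (fun n => f n a) atTop ∂μ ≤ liminf (fun n => ∫ a, f n a ∂μ) atTop := by
  set g : ℕ → α → ℝ≥0∞ := fun n a => ENNReal.ofReal (f n a) with hg
  have hg1 : ∀ n a, g n a ≤ 1 := fun n a => by
    simpa [hg] using ENNReal.ofReal_le_ofReal (h1 n a)
  have hgm : ∀ n, Measurable (g n) := fun n => (hm n).ennreal_ofReal
  have hlim_eq : ∀ a, liminf (fun n => f n a) atTop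
      = (liminf (fun n => g n a) atTop).toReal := by
    intro a
    have := ENNReal.liminf_toReal_eq (f := atTop) (b := 1) ENNReal.one_ne_top
      (Eventually.of_forall (fun n => hg1 n a)) (u := fun n => g n a)
    rw [← this]
    congr 1
    ext n
    simp [hg, ENNReal.toReal_ofReal (h0 n a)]
  have hliminf_le : ∀ a, liminf (fun n => g n a) atTop ≤ 1 := fun a =>
    liminf_le_of_le ⟨0, by simp⟩ (fun b hb => by
      rcases (hb.and (Eventually.of_forall (fun n => hg1 n a))).exists with ⟨n, h1n, h2n⟩
      exact h1n.trans h2n)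
  have key : ∫ a, liminf (fun n => f n a) atTop ∂μ
      = (∫⁻ a, liminf (fun n => g n a) atTop ∂μ).toReal := by
    rw [show (fun a => liminf (fun n => f n a) atTop)
        = fun a => (liminf (fun n => g n a) atTop).toReal from funext hlim_eq]
    rw [integral_toReal ((Measurable.liminf hgm).aemeasurable)
      (Eventually.of_forall (fun a => lt_of_le_of_lt (hliminf_le a) ENNReal.one_lt_top))]
  rw [key]
  have h2 : ∫⁻ a, liminf (fun n => g n a) atTop ∂μ ≤ liminf (fun n => ∫⁻ a, g n a ∂μ) atTop :=
    lintegral_liminf_le hgm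
  have hIb : ∀ n, ∫⁻ a, g n a ∂μ ≤ 1 := fun n => by
    calc ∫⁻ a, g n a ∂μ ≤ ∫⁻ _, 1 ∂μ := lintegral_mono (fun a => hg1 n a)
    _ = 1 := by simp
  have hIlb : liminf (fun n => ∫⁻ a, g n a ∂μ) atTop ≤ 1 :=
    liminf_le_of_le ⟨0, by simp⟩ (fun b hb => by
      rcases (hb.and (Eventually.of_forall hIb)).exists with ⟨n, h1n, h2n⟩
      exact h1n.trans h2n)
  calc (∫⁻ a, liminf (fun n => g n a) atTop ∂μ).toReal
      ≤ (liminf (fun n => ∫⁻ a, g n a ∂μ) atTop).toReal :=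
        ENNReal.toReal_mono (lt_of_le_of_lt hIlb ENNReal.one_lt_top).ne h2
    _ = liminf (fun n => (∫⁻ a, g n a ∂μ).toReal) atTop :=
        (ENNReal.liminf_toReal_eq ENNReal.one_ne_top (Eventually.of_forall hIb)).symm
    _ ≤ liminf (fun n => ∫ a, f n a ∂μ) atTop := by
        apply le_of_eq
        congr 1
        ext n
        rw [integral_eq_lintegral_of_nonneg_ae (Eventually.of_forall (h0 n))
          (hm n).aestronglyMeasurable]

/-- junction lemma. In a gambling house with play space `ℕ → X`, payoff
`r : X → [0,1]`, strategies `S` inducing play laws `P σ x`, suppose the `n`-stage values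
`v_n` and the long-run value `w∞` admit a common (increasing) modulus of continuity `η`.
If from `x` some strategy `σ*` makes the Cesàro averages converge a.s. to
`v(x) = limsup_n v_n(x)`, then `w∞(x) = v(x)`, and for every `ε > 0` there is a strategy
`σ` with `E^y_σ[liminf (1/n)∑ r_m] ≥ v(y) − 2·η(d(x,y)) − ε`. -/
theorem junction_lemma
    {X : Type*} [MetricSpace X] [CompactSpace X] [MeasurableSpace X] [BorelSpace X]
    {S : Type*} (P : S → X → Measure (ℕ → X))
    (hP : ∀ σ x, IsProbabilityMeasure (P σ x))
    (r : X → ℝ) (hr : Measurable r) (hr01 : ∀ x, r x ∈ Set.Icc (0 : ℝ) 1)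
    (vN : ℕ → X → ℝ) (winf : X → ℝ) (v : X → ℝ)
    (hvN : ∀ n x, vN n x
      = ⨆ σ : S, ∫ ω, (1 / (n : ℝ)) * ∑ m ∈ Finset.Icc 1 n, r (ω m) ∂(P σ x))
    (hwinf : ∀ x, winf x
      = ⨆ σ : S, ∫ ω,
          liminf (fun n : ℕ => (1 / (n : ℝ)) * ∑ m ∈ Finset.Icc 1 n, r (ω m)) atTop
            ∂(P σ x))
    (hv : ∀ x, v x = limsup (fun n : ℕ => vN n x) atTop)
    (η : ℝ → ℝ) (hη : Monotone η)
    (hmodv : ∀ n : ℕ, 1 ≤ n → ∀ x y : X, |vN n x - vN n y| ≤ η (dist x y))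
    (hmodw : ∀ x y : X, |winf x - winf y| ≤ η (dist x y))
    (x y : X) (σstar : S)
    (hσstar : ∀ᵐ ω ∂(P σstar x),
      Tendsto (fun n : ℕ => (1 / (n : ℝ)) * ∑ m ∈ Finset.Icc 1 n, r (ω m)) atTop
        (nhds (v x))) :
    winf x = v x ∧
    ∀ ε > (0 : ℝ), ∃ σ : S,
      (∫ ω, liminf (fun n : ℕ => (1 / (n : ℝ)) * ∑ m ∈ Finset.Icc 1 n, r (ω m)) atTop
          ∂(P σ y))
        ≥ v y - 2 * η (dist x y) - ε := by
  classical
  have hS : Nonempty S := ⟨σstar⟩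
  set f : ℕ → (ℕ → X) → ℝ :=
    fun n ω => (1 / (n : ℝ)) * ∑ m ∈ Finset.Icc 1 n, r (ω m) with hf
  have hvN' : ∀ (n : ℕ) (z : X), vN n z = ⨆ σ : S, ∫ ω, f n ω ∂(P σ z) := hvN
  have hwinf' : ∀ z : X,
      winf z = ⨆ σ : S, ∫ ω, liminf (fun n => f n ω) atTop ∂(P σ z) := hwinf
  -- pointwise bounds
  have hf0 : ∀ n ω, 0 ≤ f n ω := fun n ω =>
    mul_nonneg (by positivity) (Finset.sum_nonneg fun m _ => (hr01 (ω m)).1)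
  have hf1 : ∀ n ω, f n ω ≤ 1 := by
    intro n ω
    rcases Nat.eq_zero_or_pos n with h | h
    · simp [hf, h]
    · have hsum : ∑ m ∈ Finset.Icc 1 n, r (ω m) ≤ (n : ℝ) := by
        calc ∑ m ∈ Finset.Icc 1 n, r (ω m) ≤ ∑ m ∈ Finset.Icc 1 n, 1 :=
              Finset.sum_le_sum fun m _ => (hr01 (ω m)).2
          _ = (n : ℝ) := by simp
      have hn : (0 : ℝ) < n := by exact_mod_cast h
      rw [hf]
      simp only [one_div]
      rw [inv_mul_le_iff₀ hn]
      simpa using hsum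
  have hfm : ∀ n, Measurable (f n) := fun n =>
    (Finset.measurable_sum _ fun m _ => hr.comp (measurable_pi_apply m)).const_mul _
  -- integrability and integral bounds
  have hInt : ∀ (σ : S) (z : X) (n : ℕ), Integrable (f n) (P σ z) := by
    intro σ z n
    haveI := hP σ z
    refine ⟨(hfm n).aestronglyMeasurable, ?_⟩
    refine HasFiniteIntegral.of_bounded (C := 1) ?_
    filter_upwards with ω
    rw [Real.norm_eq_abs, abs_of_nonneg (hf0 n ω)]
    exact hf1 n ω
  have hI0 : ∀ (σ : S) (z : X) (n : ℕ), 0 ≤ ∫ ω, f n ω ∂(P σ z) := fun σ z n =>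
    integral_nonneg (hf0 n)
  have hI1 : ∀ (σ : S) (z : X) (n : ℕ), ∫ ω, f n ω ∂(P σ z) ≤ 1 := by
    intro σ z n
    haveI := hP σ z
    calc ∫ ω, f n ω ∂(P σ z) ≤ ∫ _, (1 : ℝ) ∂(P σ z) :=
          integral_mono (hInt σ z n) (integrable_const 1) fun ω => hf1 n ω
      _ = 1 := by simp
  -- liminf facts
  have hl0 : ∀ ω, 0 ≤ liminf (fun n => f n ω) atTop := fun ω =>
    le_liminf_of_le (isCoboundedUnder_ge_of_le atTop fun n => hf1 n ω)
      (Eventually.of_forall fun n => hf0 n ω)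
  have hl1 : ∀ ω, liminf (fun n => f n ω) atTop ≤ 1 := fun ω =>
    liminf_le_of_le (isBoundedUnder_of ⟨0, fun n => hf0 n ω⟩) (fun b hb => by
      rcases (hb.and (Eventually.of_forall fun n => hf1 n ω)).exists with ⟨n, h1n, h2n⟩
      exact h1n.trans h2n)
  have hlm : Measurable fun ω => liminf (fun n => f n ω) atTop := Measurable.liminf hfm
  have hlInt : ∀ (σ : S) (z : X),
      Integrable (fun ω => liminf (fun n => f n ω) atTop) (P σ z) := by
    intro σ z
    haveI := hP σ z
    refine ⟨hlm.aestronglyMeasurable, ?_⟩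
    refine HasFiniteIntegral.of_bounded (C := 1) ?_
    filter_upwards with ω
    rw [Real.norm_eq_abs, abs_of_nonneg (hl0 ω)]
    exact hl1 ω
  have hlI1 : ∀ (σ : S) (z : X), ∫ ω, liminf (fun n => f n ω) atTop ∂(P σ z) ≤ 1 := by
    intro σ z
    haveI := hP σ z
    calc ∫ ω, liminf (fun n => f n ω) atTop ∂(P σ z) ≤ ∫ _, (1 : ℝ) ∂(P σ z) :=
          integral_mono (hlInt σ z) (integrable_const 1) fun ω => hl1 ω
      _ = 1 := by simp
  -- bounds for vN
  have hvN0 : ∀ (n : ℕ) (z : X), 0 ≤ vN n z := by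
    intro n z
    rw [hvN' n z]
    calc (0 : ℝ) ≤ ∫ ω, f n ω ∂(P σstar z) := hI0 σstar z n
      _ ≤ ⨆ σ : S, ∫ ω, f n ω ∂(P σ z) :=
          le_ciSup (f := fun σ : S => ∫ ω, f n ω ∂(P σ z))
            ⟨1, by rintro _ ⟨σ', rfl⟩; exact hI1 σ' z n⟩ σstar
  have hvN1 : ∀ (n : ℕ) (z : X), vN n z ≤ 1 := by
    intro n z
    rw [hvN' n z]
    exact ciSup_le fun σ => hI1 σ z n
  -- upper bound: each strategy's liminf-integral is ≤ v z
  have upper : ∀ (z : X) (σ : S), ∫ ω, liminf (fun n => f n ω) atTop ∂(P σ z) ≤ v z := by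
    intro z σ
    haveI := hP σ z
    have fat := fatou_real (P σ z) f hfm hf0 hf1
    have h1 : liminf (fun n => ∫ ω, f n ω ∂(P σ z)) atTop
        ≤ limsup (fun n => ∫ ω, f n ω ∂(P σ z)) atTop :=
      liminf_le_limsup (isBoundedUnder_of ⟨1, fun n => hI1 σ z n⟩)
        (isBoundedUnder_of ⟨0, fun n => hI0 σ z n⟩)
    have h2 : limsup (fun n => ∫ ω, f n ω ∂(P σ z)) atTop
        ≤ limsup (fun n => vN n z) atTop := by
      refine limsup_le_limsup (Eventually.of_forall fun n => ?_)
        (isCoboundedUnder_le_of_le atTop fun n => hI0 σ z n)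
        (isBoundedUnder_of ⟨1, fun n => hvN1 n z⟩)
      show ∫ ω, f n ω ∂(P σ z) ≤ vN n z
      rw [hvN' n z]
      exact le_ciSup (f := fun σ : S => ∫ ω, f n ω ∂(P σ z))
        ⟨1, by rintro _ ⟨σ', rfl⟩; exact hI1 σ' z n⟩ σ
    rw [hv z]
    exact fat.trans (h1.trans h2)
  -- lower bound at x via σstar
  have hKey2 : ∫ ω, liminf (fun n => f n ω) atTop ∂(P σstar x) = v x := by
    haveI := hP σstar x
    have hae : (fun ω => liminf (fun n => f n ω) atTop) =ᵐ[P σstar x] fun _ => v x := by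
      filter_upwards [hσstar] with ω hω
      exact hω.liminf_eq
    rw [integral_congr_ae hae, integral_const]
    simp
  have hwx : winf x = v x := by
    apply le_antisymm
    · rw [hwinf' x]
      exact ciSup_le fun σ => upper x σ
    · calc v x = ∫ ω, liminf (fun n => f n ω) atTop ∂(P σstar x) := hKey2.symm
        _ ≤ ⨆ σ : S, ∫ ω, liminf (fun n => f n ω) atTop ∂(P σ x) :=
            le_ciSup (f := fun σ : S => ∫ ω, liminf (fun n => f n ω) atTop ∂(P σ x))
              ⟨1, by rintro _ ⟨σ', rfl⟩; exact hlI1 σ' x⟩ σstar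
        _ = winf x := (hwinf' x).symm
  refine ⟨hwx, ?_⟩
  -- modulus facts
  have hη0 : 0 ≤ η (dist x y) := by
    have h0 : (0 : ℝ) ≤ η 0 := by
      have := hmodw x x
      simpa using this
    exact h0.trans (hη dist_nonneg)
  have hvmod : ∀ a b : X, v a ≤ v b + η (dist a b) := by
    intro a b
    rw [hv a, hv b]
    have step : ∀ᶠ n in atTop, vN n a ≤ vN n b + η (dist a b) := by
      filter_upwards [eventually_ge_atTop 1] with n hn
      have := abs_le.mp (hmodv n hn a b)
      linarith [this.2]
    calc limsup (fun n => vN n a) atTop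
        ≤ limsup (fun n => vN n b + η (dist a b)) atTop :=
          limsup_le_limsup step (isCoboundedUnder_le_of_le atTop fun n => hvN0 n a)
            (isBoundedUnder_of ⟨1 + η (dist a b),
              fun n => add_le_add_left (hvN1 n b) _⟩)
      _ = limsup (fun n => vN n b) atTop + η (dist a b) :=
          limsup_add_const atTop _ _ (isBoundedUnder_of ⟨1, fun n => hvN1 n b⟩)
            (isCoboundedUnder_le_of_le atTop fun n => hvN0 n b)
  intro ε hε
  have hwy : winf y - ε < winf y := by linarith
  rw [hwinf' y] at hwy
  obtain ⟨σ, hσ⟩ := exists_lt_of_lt_ciSup hwy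
  refine ⟨σ, ?_⟩
  rw [← hwinf' y] at hσ
  have c1 : winf x - η (dist x y) ≤ winf y := by
    have h := abs_le.mp (hmodw x y)
    linarith [h.1]
  have c2 : v y ≤ v x + η (dist x y) := by
    have := hvmod y x
    rwa [dist_comm] at this
  have hfinal : v y - 2 * η (dist x y) - ε ≤ winf y - ε := by
    rw [hwx] at c1
    linarith
  exact le_of_lt (lt_of_le_of_lt hfinal hσ)
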